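/- Let M ∈ ℝ^{n×n} be Hurwitz with M ≠ 0, let ε > 0, let D ∈ ℝ^{n×n} be symmetric with D ⪰ ε·I, and let W be the solution of the Lyapunov equation MᵀW + WM + D = 0. Then W ⪰ (ε / (2‖M‖))·I; in particular λmin(W) ≥ ε / (2‖M‖). -/

import Mathlib

open Matrix MeasureTheory

/-- Spectral (ℓ² operator) norm of a real matrix. -/
noncomputable def specNorm {p q : Type*} [Fintype p] [Fintype q] [DecidableEq q]
    (M : Matrix p q ℝ) : ℝ :=
  ‖LinearMap.toContinuousLinearMap (Matrix.toEuclideanLin M)‖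

/-- A real square matrix is Hurwitz if all of its eigenvalues over ℂ have negative real part. -/
def IsHurwitz {k : Type*} [Fintype k] [DecidableEq k] (M : Matrix k k ℝ) : Prop :=
  ∀ μ ∈ spectrum ℂ (M.map (Complex.ofReal ·)), μ.re < 0

/-- Smallest (real) eigenvalue of a real matrix. -/
noncomputable def lamMin {k : Type*} [Fintype k] [DecidableEq k] (X : Matrix k k ℝ) : ℝ :=
  sInf (spectrum ℝ X)

/-- Largest (real) eigenvalue of a real matrix. -/
noncomputable def lamMax {k : Type*} [Fintype k] [DecidableEq k] (X : Matrix k k ℝ) : ℝ :=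
  sSup (spectrum ℝ X)

open Polynomial

section LyapunovAux

lemma mem_spectrum_iff_root {n : ℕ} {C : Matrix (Fin n) (Fin n) ℂ} {μ : ℂ} :
    μ ∈ spectrum ℂ C ↔ (Matrix.charpoly C).eval μ = 0 := by
  rw [spectrum.mem_iff, Matrix.charpoly, eval_det, matPolyEquiv_charmatrix, eval_sub, eval_X,
    eval_C]
  have : (algebraMap ℂ (Matrix (Fin n) (Fin n) ℂ)) μ = Matrix.scalar (Fin n) μ := rfl
  rw [this, Matrix.isUnit_iff_isUnit_det, isUnit_iff_ne_zero, not_ne_iff]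


lemma spectrum_transpose' {n : ℕ} (C : Matrix (Fin n) (Fin n) ℂ) :
    spectrum ℂ Cᵀ = spectrum ℂ C := by
  ext μ
  rw [spectrum.mem_iff, spectrum.mem_iff]
  have h : (algebraMap ℂ (Matrix (Fin n) (Fin n) ℂ)) μ - Cᵀ
      = ((algebraMap ℂ (Matrix (Fin n) (Fin n) ℂ)) μ - C)ᵀ := by
    rw [transpose_sub]
    congr 1
    ext i j
    by_cases hij : i = j <;>
      simp [Matrix.algebraMap_matrix_apply, Matrix.transpose_apply, hij, eq_comm]
  rw [h, Matrix.isUnit_iff_isUnit_det, Matrix.det_transpose, ← Matrix.isUnit_iff_isUnit_det]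

lemma lyap_inj {n : ℕ} {A X : Matrix (Fin n) (Fin n) ℝ}
    (hA : IsHurwitz A) (h : Aᵀ * X + X * A = 0) : X = 0 := by
  rcases Nat.eq_zero_or_pos n with h0 | hn
  · subst h0; exact Subsingleton.elim _ _
  haveI : NeZero n := ⟨hn.ne'⟩
  set f : ℝ →+* ℂ := algebraMap ℝ ℂ with hf
  set B : Matrix (Fin n) (Fin n) ℂ := A.map f with hB
  set Y : Matrix (Fin n) (Fin n) ℂ := X.map f with hY
  have hBY : Bᵀ * Y + Y * B = 0 := by
    have := congrArg (fun Z : Matrix (Fin n) (Fin n) ℝ => Z.map f) h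
    simpa [Matrix.map_add, Matrix.map_mul, Matrix.transpose_map] using this
  have hBY' : Bᵀ * Y = Y * (-B) := by
    rw [mul_neg]
    linear_combination (norm := noncomm_ring) hBY
  have key : ∀ k : ℕ, (Bᵀ)^k * Y = Y * (-B)^k := by
    intro k
    induction k with
    | zero => simp
    | succ k ih =>
      rw [pow_succ', mul_assoc, ih, ← mul_assoc, hBY', mul_assoc, ← pow_succ']
  have poly : ∀ p : ℂ[X], (aeval Bᵀ p) * Y = Y * (aeval (-B) p) := by
    intro p
    induction p using Polynomial.induction_on' with
    | add p q hp hq => rw [map_add, map_add, add_mul, mul_add, hp, hq]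
    | monomial k c =>
      rw [aeval_monomial, aeval_monomial, mul_assoc, key k, ← mul_assoc,
        Algebra.commutes c Y, mul_assoc]
  set p : ℂ[X] := Matrix.charpoly (-B) with hp
  have h2 : (aeval Bᵀ p) * Y = 0 := by
    rw [poly, Matrix.aeval_self_charpoly, mul_zero]
  have hdeg : 0 < p.degree := by
    rw [hp, Matrix.charpoly_degree_eq_dim, Fintype.card_fin]
    exact_mod_cast hn
  have hu : IsUnit (aeval Bᵀ p) := by
    rw [← spectrum.zero_notMem_iff ℂ]
    rw [spectrum.map_polynomial_aeval_of_degree_pos Bᵀ p hdeg]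
    rintro ⟨μ, hμ, hev⟩
    have hAB : IsHurwitz A → ∀ ν ∈ spectrum ℂ B, ν.re < 0 := by
      intro hH ν hν
      apply hH ν
      have : B = A.map (Complex.ofReal ·) := by
        rw [hB]; congr 1
      rwa [← this]
    have h3 : μ ∈ spectrum ℂ B := (spectrum_transpose' B) ▸ hμ
    have h4 : μ ∈ spectrum ℂ (-B) := mem_spectrum_iff_root.mpr hev
    have h5 : -μ ∈ spectrum ℂ B := by
      rw [← spectrum.neg_eq] at h4
      simpa using h4
    have r3 : μ.re < 0 := hAB hA μ h3
    have r5 : (-μ).re < 0 := hAB hA (-μ) h5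
    simp at r5; linarith
  have hY0 : Y = 0 := by
    obtain ⟨u, hu⟩ := hu
    have : (u : Matrix (Fin n) (Fin n) ℂ) * Y = 0 := by rw [hu]; exact h2
    calc Y = ((↑(u⁻¹) : Matrix (Fin n) (Fin n) ℂ) * ↑u) * Y := by rw [Units.inv_mul, one_mul]
    _ = (↑(u⁻¹) : Matrix (Fin n) (Fin n) ℂ) * ((u : _) * Y) := by rw [mul_assoc]
    _ = 0 := by rw [this, mul_zero]
  ext i j
  have := congrFun (congrFun hY0 i) j
  simpa [hY, Matrix.map_apply, hf] using this


lemma hurwitz_path {n : ℕ} {M : Matrix (Fin n) (Fin n) ℝ} (hM : IsHurwitz M) {t : ℝ}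
    (ht0 : 0 ≤ t) (ht1 : t ≤ 1) : IsHurwitz ((1 - t) • M - t • 1) := by
  intro μ hμ
  set Bm : Matrix (Fin n) (Fin n) ℂ := M.map (Complex.ofReal ·) with hBm
  have hmap : (((1 - t) • M - t • (1 : Matrix (Fin n) (Fin n) ℝ)).map (Complex.ofReal ·))
      = ((1 - t : ℝ) : ℂ) • Bm - ((t : ℝ) : ℂ) • (1 : Matrix (Fin n) (Fin n) ℂ) := by
    ext i j
    by_cases h : i = j <;>
      simp [hBm, Matrix.map_apply, Matrix.one_apply, h] <;> push_cast <;> ring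
  rw [hmap] at hμ
  rcases eq_or_lt_of_le ht1 with rfl | htlt
  · -- t = 1 : matrix is -1
    have h1 : ((1 - (1:ℝ) : ℝ) : ℂ) • Bm - ((1:ℝ) : ℂ) • (1 : Matrix (Fin n) (Fin n) ℂ)
        = -(1 : Matrix (Fin n) (Fin n) ℂ) := by norm_num
    rw [h1] at hμ
    have : μ = -1 := by
      by_contra hne
      apply spectrum.mem_iff.mp hμ
      have : (algebraMap ℂ (Matrix (Fin n) (Fin n) ℂ)) μ - (-1)
          = (algebraMap ℂ (Matrix (Fin n) (Fin n) ℂ)) (μ + 1) := by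
        rw [map_add, (algebraMap ℂ (Matrix (Fin n) (Fin n) ℂ)).map_one, sub_neg_eq_add]
      rw [this]
      exact (isUnit_iff_ne_zero.mpr (by intro h; apply hne; linear_combination h)).map
        (algebraMap ℂ (Matrix (Fin n) (Fin n) ℂ))
    rw [this]; norm_num
  · have hne : ((1 - t : ℝ) : ℂ) ≠ 0 := by
      simp only [ne_eq, Complex.ofReal_eq_zero]; linarith
    set ν : ℂ := (μ + (t : ℂ)) / ((1 - t : ℝ) : ℂ) with hν
    have hνeq : ((1 - t : ℝ) : ℂ) * ν = μ + (t : ℂ) := by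
      have hne' : (1 : ℂ) - (t : ℂ) ≠ 0 := by push_cast at hne; exact hne
      rw [hν, mul_div_assoc', mul_div_cancel_left₀ _ hne]
    have key : (algebraMap ℂ (Matrix (Fin n) (Fin n) ℂ)) μ
        - (((1 - t : ℝ) : ℂ) • Bm - ((t : ℝ) : ℂ) • 1)
        = ((1 - t : ℝ) : ℂ) • ((algebraMap ℂ (Matrix (Fin n) (Fin n) ℂ)) ν - Bm) := by
      rw [Algebra.algebraMap_eq_smul_one, Algebra.algebraMap_eq_smul_one, smul_sub, smul_smul,
        hνeq]
      push_cast
      module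
    have hνmem : ν ∈ spectrum ℂ Bm := by
      rw [spectrum.mem_iff]
      intro hunit
      apply spectrum.mem_iff.mp hμ
      rw [key, Algebra.smul_def]
      exact (hne.isUnit.map (algebraMap ℂ (Matrix (Fin n) (Fin n) ℂ))).mul hunit
    have hre : ν.re < 0 := hM ν hνmem
    have hμeq : μ = ((1 - t : ℝ) : ℂ) * ν - (t : ℂ) := by
      rw [hνeq]; ring
    have : μ.re = (1 - t) * ν.re - t := by
      rw [hμeq]
      simp [Complex.sub_re, Complex.mul_re]
    rw [this]
    nlinarith


attribute [local instance] Matrix.normedAddCommGroup Matrix.normedSpace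

lemma quad_continuous {n : ℕ} (x : Fin n → ℝ) :
    Continuous fun Z : Matrix (Fin n) (Fin n) ℝ => x ⬝ᵥ (Z *ᵥ x) := by
  simp only [dotProduct, mulVec]
  exact continuous_finset_sum _ fun i _ =>
    continuous_const.mul (continuous_finset_sum _ fun j _ =>
      ((continuous_apply_apply i j).mul continuous_const))

lemma quad_continuous' {n : ℕ} (Z : Matrix (Fin n) (Fin n) ℝ) :
    Continuous fun x : Fin n → ℝ => x ⬝ᵥ (Z *ᵥ x) := by
  simp only [dotProduct, mulVec]
  exact continuous_finset_sum _ fun i _ =>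
    (continuous_apply i).mul (continuous_finset_sum _ fun j _ =>
      (continuous_const.mul (continuous_apply j)))

lemma quad_smul {n : ℕ} (Z : Matrix (Fin n) (Fin n) ℝ) (c : ℝ) (x : Fin n → ℝ) :
    (c • x) ⬝ᵥ (Z *ᵥ (c • x)) = c^2 * (x ⬝ᵥ (Z *ᵥ x)) := by
  rw [smul_dotProduct, mulVec_smul, dotProduct_smul]
  simp [smul_eq_mul]; ring

lemma quad_perturb {n : ℕ} (Z₁ Z₂ : Matrix (Fin n) (Fin n) ℝ) (x : Fin n → ℝ)
    (hx : ‖x‖ ≤ 1) :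
    |x ⬝ᵥ (Z₁ *ᵥ x) - x ⬝ᵥ (Z₂ *ᵥ x)| ≤ (n^2 : ℝ) * ‖Z₁ - Z₂‖ := by
  have h : x ⬝ᵥ (Z₁ *ᵥ x) - x ⬝ᵥ (Z₂ *ᵥ x) = x ⬝ᵥ ((Z₁ - Z₂) *ᵥ x) := by
    rw [sub_mulVec, dotProduct_sub]
  rw [h]
  have hb : ∀ i j : Fin n, |x i * ((Z₁ - Z₂) i j * x j)| ≤ ‖Z₁ - Z₂‖ := by
    intro i j
    have h1 : |x i| ≤ 1 := le_trans (norm_le_pi_norm x i) hx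
    have h2 : |x j| ≤ 1 := le_trans (norm_le_pi_norm x j) hx
    have h3 : |(Z₁ - Z₂) i j| ≤ ‖Z₁ - Z₂‖ := (Z₁ - Z₂).norm_entry_le_entrywise_sup_norm
    have h0 : (0:ℝ) ≤ ‖Z₁ - Z₂‖ := norm_nonneg _
    rw [abs_mul, abs_mul]
    calc |x i| * (|(Z₁ - Z₂) i j| * |x j|)
        ≤ 1 * (‖Z₁ - Z₂‖ * 1) := by
          exact mul_le_mul h1 (mul_le_mul h3 h2 (abs_nonneg _) h0)
            (mul_nonneg (abs_nonneg _) (abs_nonneg _)) zero_le_one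
    _ = ‖Z₁ - Z₂‖ := by ring
  calc |x ⬝ᵥ ((Z₁ - Z₂) *ᵥ x)| = |∑ i, ∑ j, x i * ((Z₁ - Z₂) i j * x j)| := by
        simp [dotProduct, mulVec, Finset.mul_sum]
  _ ≤ ∑ i, ∑ j, |x i * ((Z₁ - Z₂) i j * x j)| := by
        refine (Finset.abs_sum_le_sum_abs _ _).trans ?_
        exact Finset.sum_le_sum fun i _ => Finset.abs_sum_le_sum_abs _ _
  _ ≤ ∑ _i : Fin n, ∑ _j : Fin n, ‖Z₁ - Z₂‖ := by
        exact Finset.sum_le_sum fun i _ => Finset.sum_le_sum fun j _ => hb i j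
  _ = (n^2 : ℝ) * ‖Z₁ - Z₂‖ := by simp [Finset.sum_const]; ring

lemma isOpen_negset {n : ℕ} :
    IsOpen {Z : Matrix (Fin n) (Fin n) ℝ | ∃ x : Fin n → ℝ, x ⬝ᵥ (Z *ᵥ x) < 0} := by
  rw [Set.setOf_exists]
  exact isOpen_iUnion fun x => isOpen_lt (quad_continuous x) continuous_const

lemma isOpen_pdset {n : ℕ} (hn : 0 < n) :
    IsOpen {Z : Matrix (Fin n) (Fin n) ℝ | ∀ x : Fin n → ℝ, x ≠ 0 → 0 < x ⬝ᵥ (Z *ᵥ x)} := by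
  haveI : Nonempty (Fin n) := Fin.pos_iff_nonempty.mp hn
  refine Metric.isOpen_iff.mpr ?_
  intro Z hZ
  obtain ⟨x₀, hx₀s, hmin'⟩ := (isCompact_sphere (0 : Fin n → ℝ) 1).exists_isMinOn
    (NormedSpace.sphere_nonempty.mpr zero_le_one) (quad_continuous' Z).continuousOn
  have hmin : ∀ y ∈ Metric.sphere (0 : Fin n → ℝ) 1, x₀ ⬝ᵥ (Z *ᵥ x₀) ≤ y ⬝ᵥ (Z *ᵥ y) :=
    fun y hy => hmin' hy
  have hx₀n : ‖x₀‖ = 1 := by simpa [mem_sphere_iff_norm] using hx₀s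
  set m := x₀ ⬝ᵥ (Z *ᵥ x₀) with hm
  have hmpos : 0 < m := hZ x₀ (by intro h; rw [h] at hx₀n; simp at hx₀n)
  refine ⟨m / (n^2 + 1), by positivity, ?_⟩
  intro Z' hZ' x hx
  rw [Metric.mem_ball, dist_eq_norm] at hZ'
  have hxn : (0:ℝ) < ‖x‖ := norm_pos_iff.mpr hx
  set y : Fin n → ℝ := ‖x‖⁻¹ • x with hy
  have hyn : ‖y‖ = 1 := by
    rw [hy, norm_smul, norm_inv, norm_norm, inv_mul_cancel₀ hxn.ne']
  have hysph : y ∈ Metric.sphere (0 : Fin n → ℝ) 1 := by simp [hyn]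
  have hq : 0 < y ⬝ᵥ (Z' *ᵥ y) := by
    have h1 : m ≤ y ⬝ᵥ (Z *ᵥ y) := hmin y hysph
    have h2 : |y ⬝ᵥ (Z' *ᵥ y) - y ⬝ᵥ (Z *ᵥ y)| ≤ (n^2 : ℝ) * ‖Z' - Z‖ :=
      quad_perturb Z' Z y hyn.le
    have h3 : (n^2 : ℝ) * ‖Z' - Z‖ < (n^2 : ℝ) * (m / (n^2+1)) + m / (n^2+1) := by
      have hnn : (0:ℝ) ≤ (n^2 : ℝ) := by positivity
      nlinarith [norm_nonneg (Z' - Z)]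
    have h4 : (n^2 : ℝ) * (m / (n^2+1)) + m / (n^2+1) = m := by field_simp
    have := abs_le.mp h2
    linarith [this.1]
  have hxy : x = ‖x‖ • y := by rw [hy, smul_smul, mul_inv_cancel₀ hxn.ne', one_smul]
  have hqs := quad_smul Z' ‖x‖ y
  rw [← hxy] at hqs
  rw [hqs]
  positivity


lemma dot_tr {n : ℕ} (B : Matrix (Fin n) (Fin n) ℝ) (v w : Fin n → ℝ) :
    v ⬝ᵥ (Bᵀ *ᵥ w) = w ⬝ᵥ (B *ᵥ v) := by
  simp only [dotProduct, mulVec, dotProduct, transpose_apply, Finset.mul_sum]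
  rw [Finset.sum_comm]
  congr 1; ext i; congr 1; ext j; ring

lemma lyap_posdef {n : ℕ} (hn : 0 < n) {M D W : Matrix (Fin n) (Fin n) ℝ}
    (hM : IsHurwitz M) (hDsymm : Dᵀ = D)
    (hDpos : ∀ x : Fin n → ℝ, x ≠ 0 → 0 < x ⬝ᵥ (D *ᵥ x))
    (hW : Mᵀ * W + W * M + D = 0) :
    Wᵀ = W ∧ ∀ x : Fin n → ℝ, x ≠ 0 → 0 < x ⬝ᵥ (W *ᵥ x) := by
  classical
  set A : ℝ → Matrix (Fin n) (Fin n) ℝ := fun t => (1 - t) • M - t • (1 : Matrix (Fin n) (Fin n) ℝ)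
    with hA
  have hAhur : ∀ t ∈ Set.Icc (0:ℝ) 1, IsHurwitz (A t) := fun t ht => hurwitz_path hM ht.1 ht.2
  -- the Sylvester operator
  set L : ℝ → (Matrix (Fin n) (Fin n) ℝ →ₗ[ℝ] Matrix (Fin n) (Fin n) ℝ) := fun t =>
    { toFun := fun X => (A t)ᵀ * X + X * A t
      map_add' := fun X Y => by noncomm_ring
      map_smul' := fun c X => by
        simp [mul_smul_comm, smul_mul_assoc, smul_add] } with hL
  have hLinj : ∀ t ∈ Set.Icc (0:ℝ) 1, Function.Injective (L t) := by
    intro t ht X Y hXY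
    have h0 : (A t)ᵀ * (X - Y) + (X - Y) * A t = 0 := by
      have hxy : (A t)ᵀ * X + X * A t = (A t)ᵀ * Y + Y * A t := hXY
      linear_combination (norm := noncomm_ring) hxy
    exact sub_eq_zero.mp (lyap_inj (hAhur t ht) h0)
  have hLbij : ∀ t ∈ Set.Icc (0:ℝ) 1, Function.Bijective (L t) := fun t ht =>
    ⟨hLinj t ht, LinearMap.surjective_of_injective (hLinj t ht)⟩
  set Lc : ℝ → (Matrix (Fin n) (Fin n) ℝ →L[ℝ] Matrix (Fin n) (Fin n) ℝ) := fun t =>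
    LinearMap.toContinuousLinearMap (L t) with hLc
  have hLcunit : ∀ t ∈ Set.Icc (0:ℝ) 1, IsUnit (Lc t) := by
    intro t ht
    exact ⟨(LinearEquiv.ofBijective (L t) (hLbij t ht)).toContinuousLinearEquiv.toUnit,
      by ext X; rfl⟩
  have hLccont : Continuous Lc := by
    set K : Matrix (Fin n) (Fin n) ℝ →ₗ[ℝ] Matrix (Fin n) (Fin n) ℝ :=
      { toFun := fun X => (-Mᵀ - 1) * X + X * (-M - 1)
        map_add' := fun X Y => by noncomm_ring
        map_smul' := fun c X => by simp [mul_smul_comm, smul_mul_assoc, smul_add] } with hK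
    have haff : ∀ t, Lc t = LinearMap.toContinuousLinearMap (L 0)
        + t • LinearMap.toContinuousLinearMap K := by
      intro t
      refine ContinuousLinearMap.ext fun X => ?_
      show (A t)ᵀ * X + X * A t
        = ((A 0)ᵀ * X + X * A 0) + t • ((-Mᵀ - 1) * X + X * (-M - 1))
      have hAt : A t = M + t • (-M - 1) := by rw [hA]; module
      have hAt' : (A t)ᵀ = Mᵀ + t • (-Mᵀ - 1) := by
        rw [hAt, transpose_add, transpose_smul, transpose_sub, transpose_neg, transpose_one]
      have hA0 : A 0 = M := by rw [hA]; module
      rw [hAt', hAt, hA0, add_mul, mul_add, smul_mul_assoc, mul_smul_comm]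
      module
    rw [funext haff]
    exact continuous_const.add (continuous_id.smul continuous_const)
  set Wf : ℝ → Matrix (Fin n) (Fin n) ℝ := fun t => (Ring.inverse (Lc t)) (-D) with hWf
  have hWfeq : ∀ t ∈ Set.Icc (0:ℝ) 1, (A t)ᵀ * Wf t + Wf t * A t = -D := by
    intro t ht
    have h1 : Lc t * Ring.inverse (Lc t) = 1 := Ring.mul_inverse_cancel _ (hLcunit t ht)
    have h3 : (Lc t) ((Ring.inverse (Lc t)) (-D)) = -D := by
      rw [← ContinuousLinearMap.mul_apply, h1, ContinuousLinearMap.one_apply]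
    exact h3
  have hWfL : ∀ t, ∀ X, Lc t X = (A t)ᵀ * X + X * A t := fun t X => rfl
  have hWfsym : ∀ t ∈ Set.Icc (0:ℝ) 1, (Wf t)ᵀ = Wf t := by
    intro t ht
    apply hLinj t ht
    show (A t)ᵀ * (Wf t)ᵀ + (Wf t)ᵀ * A t = (A t)ᵀ * Wf t + Wf t * A t
    have h1 : (A t)ᵀ * (Wf t)ᵀ + (Wf t)ᵀ * A t = ((A t)ᵀ * Wf t + Wf t * A t)ᵀ := by
      rw [transpose_add, transpose_mul, transpose_mul, transpose_transpose]
      abel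
    rw [h1, hWfeq t ht, transpose_neg, hDsymm]
  have hWcont : ContinuousOn Wf (Set.Icc (0:ℝ) 1) := by
    intro t ht
    apply ContinuousAt.continuousWithinAt
    have h1 : ContinuousAt Ring.inverse (Lc t) := by
      obtain ⟨u, hu⟩ := hLcunit t ht
      rw [← hu]
      exact @NormedRing.inverse_continuousAt _ ContinuousLinearMap.toNormedRing _ u
    have h2 : ContinuousAt (fun s => Ring.inverse (Lc s)) t := h1.comp hLccont.continuousAt
    exact ((ContinuousLinearMap.apply ℝ (Matrix (Fin n) (Fin n) ℝ)
      (-D)).continuous.continuousAt).comp h2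
  -- endpoints
  have hW0 : Wf 0 = W := by
    apply hLinj 0 (Set.mem_Icc.mpr ⟨le_refl _, zero_le_one⟩)
    show (A 0)ᵀ * Wf 0 + Wf 0 * A 0 = (A 0)ᵀ * W + W * A 0
    rw [hWfeq 0 (Set.mem_Icc.mpr ⟨le_refl _, zero_le_one⟩)]
    have hA0 : A 0 = M := by rw [hA]; simp
    rw [hA0]
    exact (eq_neg_of_add_eq_zero_left hW).symm
  have hW1 : Wf 1 = (1/2 : ℝ) • D := by
    apply hLinj 1 (Set.mem_Icc.mpr ⟨zero_le_one, le_refl _⟩)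
    show (A 1)ᵀ * Wf 1 + Wf 1 * A 1 = (A 1)ᵀ * ((1/2 : ℝ) • D) + ((1/2 : ℝ) • D) * A 1
    rw [hWfeq 1 (Set.mem_Icc.mpr ⟨zero_le_one, le_refl _⟩)]
    have hA1 : A 1 = -(1 : Matrix (Fin n) (Fin n) ℝ) := by rw [hA]; simp
    rw [hA1]
    simp only [transpose_neg, transpose_one, neg_mul, one_mul, mul_neg, mul_one]
    module
  -- connectedness argument on the subtype
  set PD : Set (Matrix (Fin n) (Fin n) ℝ) :=
    {Z | ∀ x : Fin n → ℝ, x ≠ 0 → 0 < x ⬝ᵥ (Z *ᵥ x)} with hPD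
  set NEG : Set (Matrix (Fin n) (Fin n) ℝ) :=
    {Z | ∃ x : Fin n → ℝ, x ⬝ᵥ (Z *ᵥ x) < 0} with hNEG
  set g : Set.Icc (0:ℝ) 1 → Matrix (Fin n) (Fin n) ℝ := fun s => Wf s with hg
  have hgc : Continuous g := ContinuousOn.restrict hWcont
  have hcover : ∀ s : Set.Icc (0:ℝ) 1, g s ∈ PD ∪ NEG := by
    intro s
    by_cases hneg : g s ∈ NEG
    · exact Or.inr hneg
    left
    simp only [hNEG, Set.mem_setOf_eq, not_exists, not_lt] at hneg
    have hpsd : (Wf s.1).PosSemidef := by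
      refine Matrix.PosSemidef.of_dotProduct_mulVec_nonneg ?_ ?_
      · show (Wf s.1)ᴴ = Wf s.1
        rw [conjTranspose_eq_transpose_of_trivial, hWfsym s.1 s.2]
      · intro x
        simpa using hneg x
    intro x hx
    rcases lt_or_eq_of_le (hpsd.dotProduct_mulVec_nonneg x) with h | h
    · simpa using h
    exfalso
    have hWx : Wf s.1 *ᵥ x = 0 := by
      rw [← hpsd.dotProduct_mulVec_zero_iff x]
      exact h.symm
    have h3 : x ⬝ᵥ ((Wf s.1)ᵀ *ᵥ (A s.1 *ᵥ x)) = 0 := by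
      rw [dot_tr, hWx, dotProduct_zero]
    rw [hWfsym s.1 s.2] at h3
    have hq : x ⬝ᵥ (D *ᵥ x) = 0 := by
      have h2 : x ⬝ᵥ (((A s.1)ᵀ * Wf s.1 + Wf s.1 * A s.1) *ᵥ x) = x ⬝ᵥ ((-D) *ᵥ x) := by
        rw [hWfeq s.1 s.2]
      rw [add_mulVec, dotProduct_add, ← mulVec_mulVec, ← mulVec_mulVec, hWx, mulVec_zero,
        dotProduct_zero, h3, neg_mulVec, dotProduct_neg] at h2
      linarith
    exact absurd hq (ne_of_gt (hDpos x hx))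
  haveI : PreconnectedSpace (Set.Icc (0:ℝ) 1) := Subtype.preconnectedSpace isPreconnected_Icc
  have hdisj : Disjoint (g ⁻¹' PD) (g ⁻¹' NEG) := by
    rw [Set.disjoint_left]
    rintro s hs1 hs2
    obtain ⟨x, hxlt⟩ := hs2
    have hx0 : x ≠ 0 := by
      rintro rfl
      simp at hxlt
    exact absurd (hs1 x hx0) (not_lt.mpr hxlt.le)
  have h1mem : (⟨1, by norm_num⟩ : Set.Icc (0:ℝ) 1) ∈ g ⁻¹' PD := by
    show Wf 1 ∈ PD
    rw [hW1]
    intro x hx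
    rw [smul_mulVec, dotProduct_smul, smul_eq_mul]
    have := hDpos x hx
    linarith
  have hsub : (Set.univ : Set (Set.Icc (0:ℝ) 1)) ⊆ g ⁻¹' PD :=
    IsPreconnected.subset_left_of_subset_union
      (isOpen_pdset hn |>.preimage hgc) (isOpen_negset.preimage hgc) hdisj
      (fun s _ => hcover s) ⟨⟨1, by norm_num⟩, Set.mem_univ _, h1mem⟩
      isPreconnected_univ
  have h0mem : (⟨0, by norm_num⟩ : Set.Icc (0:ℝ) 1) ∈ g ⁻¹' PD := hsub (Set.mem_univ _)
  have hWPD : W ∈ PD := by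
    have hW0PD : Wf 0 ∈ PD := h0mem
    rwa [hW0] at hW0PD
  exact ⟨by rw [← hW0]; exact hWfsym 0 (by norm_num), hWPD⟩


lemma specNorm_pos {n : ℕ} {M : Matrix (Fin n) (Fin n) ℝ} (hM0 : M ≠ 0) : 0 < specNorm M := by
  rw [specNorm, norm_pos_iff]
  intro h
  apply hM0
  have h1 : Matrix.toEuclideanLin M = 0 := by
    have := congrArg (fun f : _ →L[ℝ] _ => (f : EuclideanSpace ℝ (Fin n) →ₗ[ℝ] EuclideanSpace ℝ (Fin n))) h
    simpa using this
  simpa using (map_eq_zero_iff _ (Matrix.toEuclideanLin (𝕜 := ℝ)).injective).mp h1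

lemma dot_mulVec_abs_le {n : ℕ} (M : Matrix (Fin n) (Fin n) ℝ) (v : Fin n → ℝ) :
    |v ⬝ᵥ (M *ᵥ v)| ≤ specNorm M * (v ⬝ᵥ v) := by
  set ve : EuclideanSpace ℝ (Fin n) := (WithLp.equiv 2 (Fin n → ℝ)).symm v with hve
  have hinner : ∀ w : Fin n → ℝ,
      (inner ℝ ve ((WithLp.equiv 2 (Fin n → ℝ)).symm w) : ℝ) = v ⬝ᵥ w := by
    intro w
    simp [PiLp.inner_apply, RCLike.inner_apply, dotProduct, hve, WithLp.equiv_symm_apply, mul_comm]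
  have h1 : (inner ℝ ve (Matrix.toEuclideanLin M ve) : ℝ) = v ⬝ᵥ (M *ᵥ v) := by
    rw [hve, WithLp.equiv_symm_apply, Matrix.toEuclideanLin_apply_piLp_toLp]
    exact hinner (M *ᵥ v)
  have h2 : ‖Matrix.toEuclideanLin M ve‖ ≤ specNorm M * ‖ve‖ := by
    have h := (LinearMap.toContinuousLinearMap (Matrix.toEuclideanLin M)).le_opNorm ve
    rw [specNorm]
    simpa only [LinearMap.coe_toContinuousLinearMap'] using h
  have h3 : ‖ve‖ * ‖ve‖ = v ⬝ᵥ v := by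
    rw [← real_inner_self_eq_norm_mul_norm]
    exact hinner v
  calc |v ⬝ᵥ (M *ᵥ v)| = |(inner ℝ ve (Matrix.toEuclideanLin M ve) : ℝ)| := by rw [h1]
  _ ≤ ‖ve‖ * ‖Matrix.toEuclideanLin M ve‖ := abs_real_inner_le_norm _ _
  _ ≤ ‖ve‖ * (specNorm M * ‖ve‖) := by
      exact mul_le_mul_of_nonneg_left h2 (norm_nonneg _)
  _ = specNorm M * (‖ve‖ * ‖ve‖) := by ring
  _ = specNorm M * (v ⬝ᵥ v) := by rw [h3]


lemma dot_self_pos {n : ℕ} {v : Fin n → ℝ} (hv : v ≠ 0) : 0 < v ⬝ᵥ v := by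
  rcases lt_or_eq_of_le (Finset.sum_nonneg fun i _ => mul_self_nonneg (v i)) with h | h
  · exact h
  · exact absurd (dotProduct_self_eq_zero.mp h.symm) hv

lemma eig_lower {n : ℕ} {M D W : Matrix (Fin n) (Fin n) ℝ} {eps : ℝ}
    (hD : (D - eps • (1 : Matrix (Fin n) (Fin n) ℝ)).PosSemidef)
    (hW : Mᵀ * W + W * M + D = 0) (hWsym : Wᵀ = W) (hMn : 0 < specNorm M)
    {μ : ℝ} {v : Fin n → ℝ} (hv : v ≠ 0) (hWv : W *ᵥ v = μ • v) (hμ : 0 < μ) :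
    eps / (2 * specNorm M) ≤ μ := by
  have hs : 0 < v ⬝ᵥ v := dot_self_pos hv
  have h1 : eps * (v ⬝ᵥ v) ≤ v ⬝ᵥ (D *ᵥ v) := by
    have h0 := hD.dotProduct_mulVec_nonneg v
    rw [star_trivial, sub_mulVec, dotProduct_sub, smul_mulVec, one_mulVec,
      dotProduct_smul, smul_eq_mul] at h0
    linarith
  have h2 : v ⬝ᵥ (D *ᵥ v) = -(2 * μ) * (v ⬝ᵥ (M *ᵥ v)) := by
    have e1 : Mᵀ * W + W * M = -D := eq_neg_of_add_eq_zero_left hW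
    have e2 : v ⬝ᵥ ((Mᵀ * W + W * M) *ᵥ v) = v ⬝ᵥ ((-D) *ᵥ v) := by rw [e1]
    rw [add_mulVec, dotProduct_add, ← mulVec_mulVec, ← mulVec_mulVec, hWv, mulVec_smul,
      dotProduct_smul, smul_eq_mul, dot_tr M v v, neg_mulVec, dotProduct_neg] at e2
    have e3 : v ⬝ᵥ (W *ᵥ (M *ᵥ v)) = μ * (v ⬝ᵥ (M *ᵥ v)) := by
      rw [← hWsym, dot_tr, hWv, dotProduct_smul, smul_eq_mul, dotProduct_comm]
    rw [e3] at e2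
    linarith
  have h3 : |v ⬝ᵥ (M *ᵥ v)| ≤ specNorm M * (v ⬝ᵥ v) := dot_mulVec_abs_le M v
  have h4 : eps * (v ⬝ᵥ v) ≤ 2 * μ * (specNorm M * (v ⬝ᵥ v)) := by
    have h5 : -(v ⬝ᵥ (M *ᵥ v)) ≤ |v ⬝ᵥ (M *ᵥ v)| := neg_le_abs _
    nlinarith
  have h6 : eps ≤ 2 * μ * specNorm M := by
    have := (mul_le_mul_iff_of_pos_right hs).mp (by linarith [h4] : eps * (v ⬝ᵥ v) ≤ (2 * μ * specNorm M) * (v ⬝ᵥ v))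
    exact this
  rw [div_le_iff₀ (by positivity)]
  linarith

/-- lower bound on the Lyapunov solution when the constant term dominates εI. -/
theorem stmt_16 {n : ℕ} (M : Matrix (Fin n) (Fin n) ℝ) (hM : IsHurwitz M) (hM0 : M ≠ 0)
    (eps : ℝ) (heps : 0 < eps)
    (D : Matrix (Fin n) (Fin n) ℝ) (hDsymm : D.IsHermitian)
    (hD : (D - eps • (1 : Matrix (Fin n) (Fin n) ℝ)).PosSemidef)
    (W : Matrix (Fin n) (Fin n) ℝ) (hW : Mᵀ * W + W * M + D = 0) :
    (W - (eps / (2 * specNorm M)) • (1 : Matrix (Fin n) (Fin n) ℝ)).PosSemidef ∧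
      lamMin W ≥ eps / (2 * specNorm M) := by
  rcases Nat.eq_zero_or_pos n with rfl | hn
  · exact absurd (by ext i j; exact i.elim0) hM0
  set c : ℝ := eps / (2 * specNorm M) with hc
  have hMn : 0 < specNorm M := specNorm_pos hM0
  have hcpos : 0 < c := by rw [hc]; positivity
  have hDt : Dᵀ = D := by
    rw [← Matrix.conjTranspose_eq_transpose_of_trivial]; exact hDsymm
  have hDpos : ∀ x : Fin n → ℝ, x ≠ 0 → 0 < x ⬝ᵥ (D *ᵥ x) := by
    intro x hx
    have h0 := hD.dotProduct_mulVec_nonneg x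
    rw [star_trivial, sub_mulVec, dotProduct_sub, smul_mulVec, one_mulVec,
      dotProduct_smul, smul_eq_mul] at h0
    have := dot_self_pos hx
    nlinarith
  obtain ⟨hWsym, hWpd⟩ := lyap_posdef hn hM hDt hDpos hW
  set Z : Matrix (Fin n) (Fin n) ℝ := W - c • 1 with hZ
  have hZherm : Z.IsHermitian := by
    show Zᴴ = Z
    rw [Matrix.conjTranspose_eq_transpose_of_trivial, hZ, transpose_sub, transpose_smul,
      transpose_one, hWsym]
  have hWZ : W = Z + c • 1 := by rw [hZ]; abel
  have heig : ∀ j, 0 ≤ hZherm.eigenvalues j := by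
    intro j
    set v : Fin n → ℝ := ⇑(hZherm.eigenvectorBasis j) with hv
    have hZv : Z *ᵥ v = hZherm.eigenvalues j • v := hZherm.mulVec_eigenvectorBasis j
    have hv0 : v ≠ 0 := by
      intro h
      exact hZherm.eigenvectorBasis.orthonormal.ne_zero j (by simpa [hv] using h)
    have hWv : W *ᵥ v = (hZherm.eigenvalues j + c) • v := by
      rw [hWZ, add_mulVec, hZv, smul_mulVec, one_mulVec, ← add_smul]
    have hμpos : 0 < hZherm.eigenvalues j + c := by
      have hq := hWpd v hv0
      rw [hWv, dotProduct_smul, smul_eq_mul] at hq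
      have := dot_self_pos hv0
      nlinarith
    have := eig_lower hD hW hWsym hMn hv0 hWv hμpos
    rw [← hc] at this
    linarith
  have hZpsd : Z.PosSemidef := hZherm.posSemidef_iff_eigenvalues_nonneg.mpr heig
  refine ⟨hZpsd, ?_⟩
  have hWherm : W.IsHermitian := by
    show Wᴴ = W
    rw [Matrix.conjTranspose_eq_transpose_of_trivial, hWsym]
  show c ≤ lamMin W
  rw [lamMin]
  apply le_csInf
  · exact ⟨_, hWherm.eigenvalues_mem_spectrum_real ⟨0, hn⟩⟩
  · intro b hb
    have hb' : ¬IsUnit (algebraMap ℝ (Matrix (Fin n) (Fin n) ℝ) b - W) := spectrum.mem_iff.mp hb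
    have hdet : (algebraMap ℝ (Matrix (Fin n) (Fin n) ℝ) b - W).det = 0 := by
      by_contra h
      exact hb' ((Matrix.isUnit_iff_isUnit_det _).mpr (isUnit_iff_ne_zero.mpr h))
    obtain ⟨v, hv0, hv⟩ := (Matrix.exists_mulVec_eq_zero_iff).mpr hdet
    have hWv : W *ᵥ v = b • v := by
      have h5 : (algebraMap ℝ (Matrix (Fin n) (Fin n) ℝ) b - W) *ᵥ v = 0 := hv
      rw [sub_mulVec, Algebra.algebraMap_eq_smul_one, smul_mulVec, one_mulVec] at h5
      exact (sub_eq_zero.mp h5).symm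
    have hq := hZpsd.dotProduct_mulVec_nonneg v
    rw [star_trivial, hZ, sub_mulVec, dotProduct_sub, hWv, smul_mulVec, one_mulVec,
      dotProduct_smul, dotProduct_smul, smul_eq_mul, smul_eq_mul] at hq
    have := dot_self_pos hv0
    nlinarith


end LyapunovAux
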